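/- Let γ, A ∈ B(H) satisfy γ² = γ, γ* = γ, A* = A, γ A γ = 0 and (1 − γ) A (1 − γ) = 0. Set B := A γ − γ A. Then B* = −B, and the curve γ_t := exp(tB) ∘ γ ∘ exp(−tB) (operator exponential in the Banach algebra B(H)) satisfies: γ_t² = γ_t and γ_t* = γ_t for all t ∈ ℝ, γ_0 = γ, and t ↦ γ_t is differentiable at t = 0 in operator norm with derivative A. -/

import Mathlib

open NormedSpace

/-- The curve `t ↦ exp(tB) γ exp(−tB)` in the Banach algebra `B(H)`. -/
noncomputable def projCurve {H : Type*} [NormedAddCommGroup H] [InnerProductSpace ℂ H]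
    [CompleteSpace H] (γ B : H →L[ℂ] H) (t : ℝ) : H →L[ℂ] H :=
  NormedSpace.exp (t • B) * γ * NormedSpace.exp (-(t • B))

set_option maxHeartbeats 1000000 in
set_option synthInstance.maxHeartbeats 200000 in
/-- Let `γ, A ∈ B(H)` satisfy `γ² = γ`, `γ* = γ`, `A* = A`, `γAγ = 0` and
`(1 − γ)A(1 − γ) = 0`.  Set `B := Aγ − γA`.  Then `B* = −B`, and the curve
`γ_t := exp(tB) γ exp(−tB)` consists of self-adjoint idempotents, starts at `γ`, and is
differentiable at `t = 0` (in operator norm) with derivative `A`. -/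
theorem stmt1 {H : Type*} [NormedAddCommGroup H] [InnerProductSpace ℂ H] [CompleteSpace H]
    (γ A : H →L[ℂ] H)
    (hidem : γ * γ = γ)
    (hsa : ContinuousLinearMap.adjoint γ = γ)
    (hAsa : ContinuousLinearMap.adjoint A = A)
    (h1 : γ * A * γ = 0)
    (h2 : (1 - γ) * A * (1 - γ) = 0) :
    ContinuousLinearMap.adjoint (A * γ - γ * A) = -(A * γ - γ * A) ∧
    (∀ t : ℝ, projCurve γ (A * γ - γ * A) t * projCurve γ (A * γ - γ * A) t
        = projCurve γ (A * γ - γ * A) t) ∧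
    (∀ t : ℝ, ContinuousLinearMap.adjoint (projCurve γ (A * γ - γ * A) t)
        = projCurve γ (A * γ - γ * A) t) ∧
    projCurve γ (A * γ - γ * A) 0 = γ ∧
    HasDerivAt (projCurve γ (A * γ - γ * A)) A 0 := by
  set B := A * γ - γ * A with hB
  have hsγ : star γ = γ := by rwa [ContinuousLinearMap.star_eq_adjoint]
  have hsA : star A = A := by rwa [ContinuousLinearMap.star_eq_adjoint]
  have hBstar : star B = -B := by
    simp [hB, star_sub, star_mul, hsγ, hsA]
  have hinv : ∀ t : ℝ, exp (-(t • B)) * exp (t • B) = 1 := by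
    intro t
    rw [← exp_add_of_commute_of_mem_ball (𝕂 := ℂ) (Commute.neg_left (Commute.refl (t • B)))
      ((expSeries_radius_eq_top ℂ (H →L[ℂ] H)).symm ▸ edist_lt_top _ _)
      ((expSeries_radius_eq_top ℂ (H →L[ℂ] H)).symm ▸ edist_lt_top _ _), neg_add_cancel, exp_zero]
  have hAg : γ * A + A * γ = A := by
    have e : A - (γ * A + A * γ) + γ * A * γ = (1 - γ) * A * (1 - γ) := by noncomm_ring
    rw [h2, h1, add_zero, sub_eq_zero] at e
    exact e.symm
  have hkey : B * γ - γ * B = A := by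
    have e : B * γ - γ * B = A * (γ * γ) + (γ * γ) * A - (γ * A * γ + γ * A * γ) := by
      rw [hB]; noncomm_ring
    rw [hidem, h1, add_zero, sub_zero, add_comm, hAg] at e
    exact e
  refine ⟨by rw [← ContinuousLinearMap.star_eq_adjoint]; exact hBstar, ?_, ?_, ?_, ?_⟩
  · intro t
    have e : projCurve γ B t * projCurve γ B t
        = exp (t • B) * γ * (exp (-(t • B)) * exp (t • B)) * γ * exp (-(t • B)) := by
      simp only [projCurve]; noncomm_ring
    rw [hinv t, mul_one, mul_assoc _ γ γ, hidem] at e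
    exact e
  · intro t
    rw [← ContinuousLinearMap.star_eq_adjoint]
    simp only [projCurve, star_mul, star_exp, star_neg, star_smul, star_trivial, hBstar,
      smul_neg, neg_neg, mul_assoc]
    rw [hsγ]
  · simp [projCurve, exp_zero]
  · have d1 : HasDerivAt (fun t : ℝ => exp (t • B)) B 0 := by
      have h := hasDerivAt_exp_smul_const (𝕂 := ℝ) B 0
      simpa using h
    have d2 : HasDerivAt (fun t : ℝ => exp (-(t • B))) (-B) 0 := by
      have h := hasDerivAt_exp_smul_const (𝕂 := ℝ) (-B) 0
      simpa [smul_neg] using h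
    have d3 : HasDerivAt (fun t : ℝ => exp (t • B) * γ) (B * γ) 0 := d1.mul_const γ
    have d4 := d3.mul d2
    have h0 : exp (-((0:ℝ) • B)) = 1 := by rw [zero_smul, neg_zero, exp_zero]
    have h0' : exp ((0:ℝ) • B) = 1 := by rw [zero_smul, exp_zero]
    simp only [h0, h0', mul_one, one_mul] at d4
    have hval : B * γ + γ * -B = A := by rw [mul_neg, ← sub_eq_add_neg, hkey]
    have e0 : projCurve γ B = fun t : ℝ => exp (t • B) * γ * exp (-(t • B)) := rfl
    rw [e0]
    exact hval ▸ d4
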